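/- arXiv:1402.2040 — 5 statements merged into one kernel-verified Lean document; each statement's English description precedes it below -/
import Mathlib

section
/- For integers n > k ≥ 0, S(n,k) = C(n,k) · Σ_{ℓ=1}^{n-k} (-1)^ℓ · [C(k,ℓ)/C(n-k+ℓ, n-k)] · Σ_{i=0}^{ℓ} (-1)^i · C(n-k+ℓ, ℓ-i) · S(n-k+i, i). -/
/-- Stirling numbers of the second kind. -/
def S : ℕ → ℕ → ℕ
  | 0, 0 => 1
  | 0, _ + 1 => 0
  | _ + 1, 0 => 0
  | n + 1, k + 1 => (k + 1) * S n (k + 1) + S n k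

/-- Associated Stirling numbers of the second kind. -/
def B : ℕ → ℕ → ℕ
  | 0, 0 => 1
  | 0, _ + 1 => 0
  | _ + 1, 0 => 0
  | m + 1, j + 1 => (j + 1) * B m (j + 1) + (m + 1 + j) * B m j

lemma chcongr {a b a' b' : ℕ} (h1 : a = a') (h2 : b = b') : a.choose b = a'.choose b' := by
  rw [h1, h2]

lemma S_lt_eq_zero : ∀ n k, n < k → S n k = 0
  | 0, 0, h => absurd h (by omega)
  | 0, _ + 1, _ => rfl
  | _ + 1, 0, h => absurd h (by omega)
  | n + 1, k + 1, h => by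
      show (k + 1) * S n (k + 1) + S n k = 0
      rw [S_lt_eq_zero n (k + 1) (by omega), S_lt_eq_zero n k (by omega)]
      simp

lemma S_self : ∀ k, S k k = 1
  | 0 => rfl
  | k + 1 => by
      show (k + 1) * S k (k + 1) + S k k = 1
      rw [S_lt_eq_zero k (k + 1) (by omega), S_self k]
      simp

lemma B_lt_eq_zero : ∀ m j, m < j → B m j = 0
  | 0, 0, h => absurd h (by omega)
  | 0, _ + 1, _ => rfl
  | _ + 1, 0, h => absurd h (by omega)
  | m + 1, j + 1, h => by
      show (j + 1) * B m (j + 1) + (m + 1 + j) * B m j = 0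
      rw [B_lt_eq_zero m (j + 1) (by omega), B_lt_eq_zero m j (by omega)]
      simp

/-- Subset-of-a-subset binomial identity. -/
lemma choose_base (a b c : ℕ) (hb : b ≤ a) :
    a.choose b * (a - b).choose c = a.choose (b + c) * (b + c).choose b := by
  rcases le_or_gt (b + c) a with hbc | hbc
  · have h := Nat.choose_mul (n := a) (k := b + c) (s := b) (by omega)
    rw [h, show b + c - b = c from by omega]
  · rw [Nat.choose_eq_zero_of_lt hbc,
      Nat.choose_eq_zero_of_lt (show a - b < c from by omega)]
    simp

lemma choose_lemma3 (m k ℓ : ℕ) :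
    (m + k).choose k * k.choose ℓ = (m + k).choose (m + ℓ) * (m + ℓ).choose m := by
  have h2 := choose_base (m + k) m ℓ (by omega)
  rw [show m + k - m = k from by omega] at h2
  have h1 : (m + k).choose k = (m + k).choose m := by
    have h := Nat.choose_symm (show k ≤ m + k from by omega)
    rw [show m + k - k = m from by omega] at h
    exact h.symm
  rw [h1, h2]

lemma choose_subsub (m ℓ j u : ℕ) (hu : u ≤ ℓ) :
    (m + ℓ).choose u * (m + ℓ - u).choose (m + j) =
      (m + ℓ).choose (m + j) * (ℓ - j).choose u := by
  rcases le_or_gt j ℓ with hj | hj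
  · have h1 := choose_base (m + ℓ) u (m + j) (by omega)
    have h2 := choose_base (m + ℓ) (m + j) u (by omega)
    rw [show ℓ - j = m + ℓ - (m + j) from by omega, h1, h2]
    rw [show u + (m + j) = m + j + u from by omega]
    congr 1
    have h := Nat.choose_symm (show u ≤ m + j + u from by omega)
    rw [show m + j + u - u = m + j from by omega] at h
    exact h.symm
  · rw [Nat.choose_eq_zero_of_lt (show m + ℓ - u < m + j from by omega),
      Nat.choose_eq_zero_of_lt (show m + ℓ < m + j from by omega)]
    simp

/-- The key multiplicative step for the main recurrence. -/
lemma choose_step (m j k : ℕ) :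
    (m + j + 1) * (m + k + 1).choose (m + j + 1) + j * (m + k + 1).choose (m + j) =
      (k + 1) * (m + k + 1).choose (m + j) := by
  have h := Nat.choose_succ_right_eq (m + k + 1) (m + j)
  rw [show m + k + 1 - (m + j) = k + 1 - j from by omega] at h
  rcases le_or_gt j (k + 1) with hj | hj
  · calc (m + j + 1) * (m + k + 1).choose (m + j + 1) + j * (m + k + 1).choose (m + j)
        = (m + k + 1).choose (m + j + 1) * (m + j + 1) + j * (m + k + 1).choose (m + j) := by ring
      _ = (m + k + 1).choose (m + j) * (k + 1 - j) + j * (m + k + 1).choose (m + j) := by rw [h]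
      _ = ((k + 1 - j) + j) * (m + k + 1).choose (m + j) := by ring
      _ = (k + 1) * (m + k + 1).choose (m + j) := by rw [show (k + 1 - j) + j = k + 1 from by omega]
  · rw [Nat.choose_eq_zero_of_lt (show m + k + 1 < m + j + 1 from by omega),
      Nat.choose_eq_zero_of_lt (show m + k + 1 < m + j from by omega)]
    simp

/-- Expansion of Stirling numbers along a diagonal. -/
lemma S_eq_sum_B : ∀ m k, S (m + k) k =
    ∑ j ∈ Finset.range (m + 1), B m j * (m + k).choose (m + j) := by
  intro m
  induction m with
  | zero =>
      intro k
      simp [S_self k, B]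
  | succ m ihm =>
      intro k
      induction k with
      | zero =>
          rw [Finset.sum_eq_zero, show S (m + 1 + 0) 0 = 0 from rfl]
          intro j hj
          rcases Nat.eq_zero_or_pos j with rfl | hjpos
          · rw [show B (m + 1) 0 = 0 from rfl]
            simp
          · rw [Nat.choose_eq_zero_of_lt (show m + 1 + 0 < m + 1 + j from by omega)]
            simp
      | succ k ihk =>
          have hS : S (m + 1 + (k + 1)) (k + 1) =
              (k + 1) * S (m + (k + 1)) (k + 1) + S (m + 1 + k) k := by
            rw [show m + 1 + (k + 1) = (m + (k + 1)) + 1 from by omega]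
            show (k + 1) * S (m + (k + 1)) (k + 1) + S (m + (k + 1)) k = _
            rw [show m + (k + 1) = m + 1 + k from by omega]
          rw [hS, ihm (k + 1), ihk]
          have pascal : ∀ j ∈ Finset.range (m + 1 + 1),
              B (m + 1) j * (m + 1 + (k + 1)).choose (m + 1 + j) =
                B (m + 1) j * (m + k + 1).choose (m + j) +
                B (m + 1) j * (m + 1 + k).choose (m + 1 + j) := by
            intro j _
            rw [← Nat.mul_add]
            congr 1
            calc (m + 1 + (k + 1)).choose (m + 1 + j)
                = ((m + k + 1) + 1).choose ((m + j) + 1) := chcongr (by omega) (by omega)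
              _ = (m + k + 1).choose (m + j) + (m + k + 1).choose ((m + j) + 1) :=
                  Nat.choose_succ_succ _ _
              _ = (m + k + 1).choose (m + j) + (m + 1 + k).choose (m + 1 + j) := by
                  rw [chcongr (show m + k + 1 = m + 1 + k from by omega)
                    (show (m + j) + 1 = m + 1 + j from by omega)]
          rw [Finset.sum_congr rfl pascal, Finset.sum_add_distrib]
          congr 1
          -- ∑_{j<m+2} B(m+1,j) C(m+k+1, m+j) = (k+1) ∑_{j<m+1} B(m,j) C(m+(k+1), m+j)
          rw [Finset.sum_range_succ' (fun j => B (m + 1) j * (m + k + 1).choose (m + j)) (m + 1)]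
          rw [show B (m + 1) 0 = 0 from rfl]
          simp only [Nat.zero_mul, zero_mul, add_zero]
          have expand : ∀ j ∈ Finset.range (m + 1),
              B (m + 1) (j + 1) * (m + k + 1).choose (m + (j + 1)) =
                ((j + 1) * B m (j + 1) * (m + k + 1).choose (m + (j + 1))) +
                ((m + j + 1) * B m j * (m + k + 1).choose (m + j + 1)) := by
            intro j _
            rw [show B (m + 1) (j + 1) = (j + 1) * B m (j + 1) + (m + 1 + j) * B m j from rfl]
            rw [show m + (j + 1) = m + j + 1 from by omega]
            ring_nf
          rw [Finset.sum_congr rfl expand, Finset.sum_add_distrib]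
          have shift : (∑ j ∈ Finset.range (m + 1),
                (j + 1) * B m (j + 1) * (m + k + 1).choose (m + (j + 1)))
              = ∑ j ∈ Finset.range (m + 1), j * B m j * (m + k + 1).choose (m + j) := by
            have h := Finset.sum_range_succ'
              (fun j => j * B m j * (m + k + 1).choose (m + j)) (m + 1)
            simp only [Nat.zero_mul, zero_mul, add_zero] at h
            rw [← h, Finset.sum_range_succ, B_lt_eq_zero m (m + 1) (by omega)]
            simp
          rw [shift, ← Finset.sum_add_distrib, Finset.mul_sum]
          apply Finset.sum_congr rfl
          intro j _
          rw [show m + (k + 1) = m + k + 1 from by omega]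
          symm
          calc j * B m j * (m + k + 1).choose (m + j) +
                (m + j + 1) * B m j * (m + k + 1).choose (m + j + 1)
              = B m j * ((m + j + 1) * (m + k + 1).choose (m + j + 1) +
                  j * (m + k + 1).choose (m + j)) := by ring
            _ = B m j * ((k + 1) * (m + k + 1).choose (m + j)) := by rw [choose_step m j k]
            _ = (k + 1) * (B m j * (m + k + 1).choose (m + j)) := by ring

/-- Orthogonality. -/
lemma ortho (m ℓ j : ℕ) :
    ∑ i ∈ Finset.range (ℓ + 1),
        (-1 : ℚ) ^ i * ((m + ℓ).choose (ℓ - i) : ℚ) * ((m + i).choose (m + j) : ℚ) =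
      if j = ℓ then (-1 : ℚ) ^ ℓ else 0 := by
  rcases lt_or_ge ℓ j with hj | hj
  · rw [if_neg (by omega), Finset.sum_eq_zero]
    intro i hi
    simp only [Finset.mem_range] at hi
    rw [Nat.choose_eq_zero_of_lt (show m + i < m + j from by omega)]
    simp
  · rw [← Finset.sum_range_reflect]
    have key : ∀ u ∈ Finset.range (ℓ + 1),
        (-1 : ℚ) ^ (ℓ + 1 - 1 - u) * ((m + ℓ).choose (ℓ - (ℓ + 1 - 1 - u)) : ℚ) *
            ((m + (ℓ + 1 - 1 - u)).choose (m + j) : ℚ) =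
          (-1 : ℚ) ^ ℓ * ((m + ℓ).choose (m + j) : ℚ) *
            ((-1 : ℚ) ^ u * ((ℓ - j).choose u : ℚ)) := by
      intro u hu
      simp only [Finset.mem_range] at hu
      have hu' : u ≤ ℓ := by omega
      rw [show ℓ + 1 - 1 - u = ℓ - u from by omega,
        show ℓ - (ℓ - u) = u from by omega,
        show m + (ℓ - u) = m + ℓ - u from by omega]
      have hsign : (-1 : ℚ) ^ (ℓ - u) = (-1 : ℚ) ^ ℓ * (-1 : ℚ) ^ u := by
        have h1 : (-1 : ℚ) ^ (ℓ - u) * (-1 : ℚ) ^ u = (-1 : ℚ) ^ ℓ := by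
          rw [← pow_add]
          congr 1
          omega
        have h2 : (-1 : ℚ) ^ u * (-1 : ℚ) ^ u = 1 := by
          rw [← pow_add, Even.neg_one_pow ⟨u, by ring⟩]
        calc (-1 : ℚ) ^ (ℓ - u) = (-1 : ℚ) ^ (ℓ - u) * ((-1 : ℚ) ^ u * (-1 : ℚ) ^ u) := by
              rw [h2, mul_one]
          _ = ((-1 : ℚ) ^ (ℓ - u) * (-1 : ℚ) ^ u) * (-1 : ℚ) ^ u := by ring
          _ = (-1 : ℚ) ^ ℓ * (-1 : ℚ) ^ u := by rw [h1]
      have hch : (((m + ℓ).choose u : ℚ) * ((m + ℓ - u).choose (m + j) : ℚ)) =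
          ((m + ℓ).choose (m + j) : ℚ) * ((ℓ - j).choose u : ℚ) := by
        exact_mod_cast congrArg (Nat.cast (R := ℚ)) (choose_subsub m ℓ j u hu')
      calc (-1 : ℚ) ^ (ℓ - u) * ((m + ℓ).choose u : ℚ) * ((m + ℓ - u).choose (m + j) : ℚ)
          = (-1 : ℚ) ^ (ℓ - u) * (((m + ℓ).choose u : ℚ) * ((m + ℓ - u).choose (m + j) : ℚ)) := by
            ring
        _ = ((-1 : ℚ) ^ ℓ * (-1 : ℚ) ^ u) * (((m + ℓ).choose (m + j) : ℚ) * ((ℓ - j).choose u : ℚ)) := by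
            rw [hsign, hch]
        _ = (-1 : ℚ) ^ ℓ * ((m + ℓ).choose (m + j) : ℚ) *
              ((-1 : ℚ) ^ u * ((ℓ - j).choose u : ℚ)) := by ring
    rw [Finset.sum_congr rfl key, ← Finset.mul_sum]
    have halt : ∑ u ∈ Finset.range (ℓ + 1), (-1 : ℚ) ^ u * ((ℓ - j).choose u : ℚ) =
        if ℓ - j = 0 then 1 else 0 := by
      have hz : (∑ u ∈ Finset.range ((ℓ - j) + 1), (-1 : ℤ) ^ u * ((ℓ - j).choose u : ℤ)) =
          if (ℓ - j) = 0 then 1 else 0 := Int.alternating_sum_range_choose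
      have hsub : (∑ u ∈ Finset.range ((ℓ - j) + 1), (-1 : ℚ) ^ u * ((ℓ - j).choose u : ℚ)) =
          ∑ u ∈ Finset.range (ℓ + 1), (-1 : ℚ) ^ u * ((ℓ - j).choose u : ℚ) := by
        apply Finset.sum_subset
        · intro x hx
          simp only [Finset.mem_range] at hx ⊢
          omega
        · intro x _ hx
          simp only [Finset.mem_range] at hx
          rw [Nat.choose_eq_zero_of_lt (by omega)]
          simp
      rw [← hsub]
      exact_mod_cast hz
    rw [halt]
    rcases eq_or_ne j ℓ with rfl | hne
    · rw [if_pos (by omega), if_pos rfl]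
      simp
    · rw [if_neg (by omega), if_neg hne]
      ring

lemma inner_sum_eq (m ℓ : ℕ) (hℓ : ℓ ≤ m) :
    ∑ i ∈ Finset.range (ℓ + 1),
        (-1 : ℚ) ^ i * ((m + ℓ).choose (ℓ - i) : ℚ) * (S (m + i) i : ℚ) =
      (-1 : ℚ) ^ ℓ * (B m ℓ : ℚ) := by
  have expand : ∀ i ∈ Finset.range (ℓ + 1),
      (-1 : ℚ) ^ i * ((m + ℓ).choose (ℓ - i) : ℚ) * (S (m + i) i : ℚ) =
        ∑ j ∈ Finset.range (m + 1),
          (B m j : ℚ) *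
            ((-1 : ℚ) ^ i * ((m + ℓ).choose (ℓ - i) : ℚ) * ((m + i).choose (m + j) : ℚ)) := by
    intro i _
    rw [S_eq_sum_B m i]
    push_cast
    rw [Finset.mul_sum]
    apply Finset.sum_congr rfl
    intro j _
    ring
  rw [Finset.sum_congr rfl expand, Finset.sum_comm]
  have inner : ∀ j ∈ Finset.range (m + 1),
      (∑ i ∈ Finset.range (ℓ + 1),
          (B m j : ℚ) *
            ((-1 : ℚ) ^ i * ((m + ℓ).choose (ℓ - i) : ℚ) * ((m + i).choose (m + j) : ℚ))) =
        (B m j : ℚ) * (if j = ℓ then (-1 : ℚ) ^ ℓ else 0) := by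
    intro j _
    rw [← Finset.mul_sum, ortho m ℓ j]
  rw [Finset.sum_congr rfl inner]
  simp only [mul_ite, mul_zero]
  rw [Finset.sum_ite_eq' (Finset.range (m + 1)) ℓ (fun j => (B m j : ℚ) * (-1 : ℚ) ^ ℓ),
    if_pos (Finset.mem_range.mpr (by omega))]
  ring

theorem stirling2_diagonal_recurrence' (n k : ℕ) (h : k < n) :
    (S n k : ℚ) = (n.choose k : ℚ) *
      ∑ ℓ ∈ Finset.Icc 1 (n - k),
        (-1 : ℚ) ^ ℓ * ((k.choose ℓ : ℚ) / ((n - k + ℓ).choose (n - k) : ℚ)) *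
          ∑ i ∈ Finset.range (ℓ + 1),
            (-1 : ℚ) ^ i * ((n - k + ℓ).choose (ℓ - i) : ℚ) * (S (n - k + i) i : ℚ) := by
  obtain ⟨m, rfl⟩ : ∃ m, n = m + k := ⟨n - k, by omega⟩
  have hm1 : 1 ≤ m := by omega
  rw [show m + k - k = m from by omega]
  rw [Finset.mul_sum]
  have term_eq : ∀ ℓ ∈ Finset.Icc 1 m,
      ((m + k).choose k : ℚ) *
        ((-1 : ℚ) ^ ℓ * ((k.choose ℓ : ℚ) / ((m + ℓ).choose m : ℚ)) *
          ∑ i ∈ Finset.range (ℓ + 1),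
            (-1 : ℚ) ^ i * ((m + ℓ).choose (ℓ - i) : ℚ) * (S (m + i) i : ℚ)) =
        (B m ℓ : ℚ) * ((m + k).choose (m + ℓ) : ℚ) := by
    intro ℓ hℓ
    simp only [Finset.mem_Icc] at hℓ
    rw [inner_sum_eq m ℓ hℓ.2]
    have hpos : ((m + ℓ).choose m : ℚ) ≠ 0 := by
      have := Nat.choose_pos (show m ≤ m + ℓ from by omega)
      positivity
    have h3 : ((m + k).choose k : ℚ) * (k.choose ℓ : ℚ) =
        ((m + k).choose (m + ℓ) : ℚ) * ((m + ℓ).choose m : ℚ) := by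
      exact_mod_cast congrArg (Nat.cast (R := ℚ)) (choose_lemma3 m k ℓ)
    have hsq : (-1 : ℚ) ^ ℓ * (-1 : ℚ) ^ ℓ = 1 := by
      rw [← pow_add, Even.neg_one_pow ⟨ℓ, by ring⟩]
    suffices hsuff : ((m + k).choose k : ℚ) * ((-1 : ℚ) ^ ℓ * (k.choose ℓ : ℚ) * ((-1 : ℚ) ^ ℓ * (B m ℓ : ℚ))) =
        (B m ℓ : ℚ) * ((m + k).choose (m + ℓ) : ℚ) * ((m + ℓ).choose m : ℚ) by
      field_simp
      linear_combination hsuff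
    calc ((m + k).choose k : ℚ) * ((-1 : ℚ) ^ ℓ * (k.choose ℓ : ℚ) * ((-1 : ℚ) ^ ℓ * (B m ℓ : ℚ)))
        = ((-1 : ℚ) ^ ℓ * (-1 : ℚ) ^ ℓ) * (((m + k).choose k : ℚ) * (k.choose ℓ : ℚ)) *
            (B m ℓ : ℚ) := by ring
      _ = (((m + k).choose (m + ℓ) : ℚ) * ((m + ℓ).choose m : ℚ)) * (B m ℓ : ℚ) := by
          rw [hsq, h3]
          ring
      _ = (B m ℓ : ℚ) * ((m + k).choose (m + ℓ) : ℚ) * ((m + ℓ).choose m : ℚ) := by ring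
  rw [Finset.sum_congr rfl term_eq]
  have hrange : Finset.range (m + 1) = insert 0 (Finset.Icc 1 m) := by
    ext x
    simp only [Finset.mem_range, Finset.mem_insert, Finset.mem_Icc]
    omega
  have hcast : (S (m + k) k : ℚ) =
      ∑ j ∈ Finset.range (m + 1), (B m j : ℚ) * ((m + k).choose (m + j) : ℚ) := by
    rw [S_eq_sum_B m k]
    push_cast
    rfl
  rw [hcast, hrange, Finset.sum_insert (by simp)]
  have hB0 : B m 0 = 0 := by
    cases m with
    | zero => omega
    | succ m => rfl
  rw [hB0]
  simp
end

section
/- For all integers m ≥ 0, the m-th derivative of the function f(x) = (e^x − 1)/x (with f(0)=1) equals ∫_1^e u^{x-1} (ln u)^m du for every real x; in particular, f is absolutely monotonic on ℝ, i.e., f^{(m)}(x) ≥ 0 for all m ≥ 0 and all real x. -/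
open intervalIntegral

/-- The function `(e^x - 1)/x`, extended by `1` at `x = 0`. -/
noncomputable def f : ℝ → ℝ := fun x => if x = 0 then 1 else (Real.exp x - 1) / x

noncomputable def g (m : ℕ) (x : ℝ) : ℝ := ∫ t in (0:ℝ)..1, Real.exp (t * x) * t ^ m

lemma g_zero (x : ℝ) : g 0 x = f x := by
  unfold g f
  simp only [pow_zero, mul_one]
  by_cases hx : x = 0
  · simp [hx]
  · rw [intervalIntegral.integral_comp_mul_right (fun t => Real.exp t) hx]
    simp [Real.exp_zero, smul_eq_mul, div_eq_inv_mul, hx]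

lemma hasDerivAt_g (m : ℕ) (x₀ : ℝ) : HasDerivAt (g m) (g (m + 1) x₀) x₀ := by
  have key := intervalIntegral.hasDerivAt_integral_of_dominated_loc_of_deriv_le
    (F := fun x t => Real.exp (t * x) * t ^ m)
    (F' := fun x t => Real.exp (t * x) * t ^ (m + 1))
    (a := (0:ℝ)) (b := 1) (x₀ := x₀) (bound := fun _ => Real.exp (|x₀| + 1))
    (μ := MeasureTheory.volume) (s := Metric.ball x₀ 1) (Metric.ball_mem_nhds x₀ one_pos)
    ?_ ?_ ?_ ?_ ?_ ?_
  · exact key.2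
  · filter_upwards with x
    exact (Continuous.aestronglyMeasurable (by continuity))
  · apply Continuous.intervalIntegrable; continuity
  · exact (Continuous.aestronglyMeasurable (by continuity))
  · filter_upwards with t ht x hx
    rw [Set.uIoc_of_le (by norm_num)] at ht
    have ht0 : 0 < t := ht.1
    have ht1 : t ≤ 1 := ht.2
    have hx' : |x| ≤ |x₀| + 1 := by
      have := abs_sub_abs_le_abs_sub x x₀
      rw [Metric.mem_ball, Real.dist_eq] at hx
      linarith
    have h1 : Real.exp (t * x) ≤ Real.exp (|x₀| + 1) := by
      apply Real.exp_le_exp.2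
      calc t * x ≤ |t * x| := le_abs_self _
        _ = |t| * |x| := abs_mul _ _
        _ ≤ 1 * (|x₀| + 1) := by
            apply mul_le_mul _ hx' (abs_nonneg _) zero_le_one
            rw [abs_of_pos ht0]; exact ht1
        _ = |x₀| + 1 := one_mul _
    have h2 : t ^ (m + 1) ≤ 1 := pow_le_one₀ ht0.le ht1
    rw [Real.norm_eq_abs, abs_of_nonneg (by positivity)]
    calc Real.exp (t * x) * t ^ (m + 1) ≤ Real.exp (|x₀| + 1) * 1 :=
          mul_le_mul h1 h2 (by positivity) (Real.exp_pos _).le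
      _ = _ := mul_one _
  · apply Continuous.intervalIntegrable; continuity
  · filter_upwards with t _ x _
    have : HasDerivAt (fun x => Real.exp (t * x)) (t * Real.exp (t * x)) x := by
      have := ((hasDerivAt_id x).const_mul t).exp
      simpa [mul_comm] using this
    have := this.mul_const (t ^ m)
    convert this using 1
    · rfl
    ring

lemma iteratedDeriv_f (m : ℕ) : iteratedDeriv m f = g m := by
  induction m with
  | zero => simp [iteratedDeriv_zero]; ext x; exact (g_zero x).symm
  | succ n ih =>
    rw [iteratedDeriv_succ, ih]
    ext x
    exact (hasDerivAt_g n x).deriv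

lemma g_eq_integral (m : ℕ) (x : ℝ) :
    g m x = ∫ u in (1 : ℝ)..(Real.exp 1), u ^ (x - 1) * (Real.log u) ^ m := by
  have hg : ContinuousOn (fun u : ℝ => u ^ (x - 1) * Real.log u ^ m)
      (Real.exp '' Set.uIcc (0:ℝ) 1) := by
    intro u hu
    obtain ⟨t, -, rfl⟩ := hu
    have hpos : (0:ℝ) < Real.exp t := Real.exp_pos t
    exact (((Real.continuousAt_rpow_const _ _ (Or.inl hpos.ne')).mul
      ((Real.continuousAt_log hpos.ne').pow m)).continuousWithinAt)
  have h := intervalIntegral.integral_comp_smul_deriv' (a := (0:ℝ)) (b := 1)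
    (f := Real.exp) (f' := Real.exp)
    (fun t _ => Real.hasDerivAt_exp t) Real.continuous_exp.continuousOn hg
  rw [Real.exp_zero] at h
  rw [← h]
  unfold g
  apply intervalIntegral.integral_congr
  intro t _
  show Real.exp (t * x) * t ^ m = Real.exp t • (Real.exp t ^ (x - 1) * Real.log (Real.exp t) ^ m)
  rw [smul_eq_mul, Real.log_exp, Real.rpow_def_of_pos (Real.exp_pos t), Real.log_exp,
    ← mul_assoc, ← Real.exp_add]
  ring_nf

/-- The `m`-th derivative of `(e^x - 1)/x` equals `∫_1^e u^{x-1} (ln u)^m du`; in particular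
`f` is absolutely monotonic on `ℝ`. -/
theorem expm1_div_x_iteratedDeriv (m : ℕ) (x : ℝ) :
    iteratedDeriv m f x = ∫ u in (1 : ℝ)..(Real.exp 1), u ^ (x - 1) * (Real.log u) ^ m ∧
    0 ≤ iteratedDeriv m f x := by
  rw [iteratedDeriv_f]
  constructor
  · exact g_eq_integral m x
  · unfold g
    apply intervalIntegral.integral_nonneg (by norm_num)
    intro t ht
    exact mul_nonneg (Real.exp_pos _).le (pow_nonneg ht.1 _)
end

section
/- For every fixed integer k ≥ 1 and every integer ℓ ≥ 0, the inequality [S(ℓ+k+2,k)/C(ℓ+k+2,k)] · [S(ℓ+k,k)/C(ℓ+k,k)] ≥ [S(ℓ+k+1,k)/C(ℓ+k+1,k)]² holds; that is, the sequence n ↦ S(n+k,k)/C(n+k,k) is logarithmically convex in n. -/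
open Finset intervalIntegral

/-- alternating sum `∑ (-1)^(k+j) C(k,j) j^m`. -/
noncomputable def T (m k : ℕ) : ℝ :=
  ∑ j ∈ range (k+1), (-1:ℝ)^(k+j) * (k.choose j) * (j:ℝ)^m

lemma key_choose (k j : ℕ) :
    ((j:ℝ)) * ((k+1).choose j) = (k+1) * ((k+1).choose j) - (k+1) * (k.choose j) := by
  have h := Nat.choose_mul_succ_eq k j
  -- k.choose j * (k+1) = (k+1).choose j * (k+1-j)
  rcases le_or_gt j (k+1) with hj | hj
  · have : ((k.choose j : ℝ)) * (k+1) = ((k+1).choose j : ℝ) * ((k+1:ℕ) - (j:ℕ) : ℕ) := by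
      exact_mod_cast congrArg (Nat.cast : ℕ → ℝ) h
    rw [Nat.cast_sub hj] at this
    push_cast at this ⊢
    nlinarith [this]
  · have h1 : (k+1).choose j = 0 := Nat.choose_eq_zero_of_lt hj
    have h2 : k.choose j = 0 := Nat.choose_eq_zero_of_lt (by omega)
    simp [h1, h2]

lemma T_succ (m k : ℕ) : T (m+1) (k+1) = (k+1) * (T m (k+1) + T m k) := by
  have expand : T (m+1) (k+1)
      = ∑ j ∈ range (k+2), (-1:ℝ)^(k+1+j) * (((j:ℝ)) * ((k+1).choose j)) * (j:ℝ)^m := by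
    unfold T
    apply Finset.sum_congr rfl
    intro j _
    ring
  rw [expand]
  have : ∀ j ∈ range (k+2), (-1:ℝ)^(k+1+j) * (((j:ℝ)) * ((k+1).choose j)) * (j:ℝ)^m
      = (k+1) * ((-1:ℝ)^(k+1+j) * ((k+1).choose j) * (j:ℝ)^m)
        + (k+1) * ((-1:ℝ)^(k+j) * (k.choose j) * (j:ℝ)^m) := by
    intro j _
    rw [key_choose k j]
    have : (-1:ℝ)^(k+1+j) = -(-1:ℝ)^(k+j) := by
      rw [show k+1+j = (k+j)+1 by ring, pow_succ]; ring
    rw [this]; ring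
  rw [Finset.sum_congr rfl this, Finset.sum_add_distrib, ← Finset.mul_sum, ← Finset.mul_sum]
  have last : ∑ j ∈ range (k+2), (-1:ℝ)^(k+j) * (k.choose j) * (j:ℝ)^m = T m k := by
    unfold T
    rw [Finset.sum_range_succ]
    simp [Nat.choose_eq_zero_of_lt (Nat.lt_succ_self k)]
  rw [last]
  have : ∑ i ∈ range (k+2), (-1:ℝ)^(k+1+i) * ((k+1).choose i) * (i:ℝ)^m = T m (k+1) := rfl
  rw [this]; ring

lemma S_formula : ∀ m k : ℕ, (k.factorial : ℝ) * S m k = T m k := by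
  intro m
  induction m with
  | zero =>
    intro k
    cases k with
    | zero => simp [S, T]
    | succ k =>
      simp only [S, T, Nat.cast_zero, mul_zero]
      have h := Int.alternating_sum_range_choose (n := k+1)
      rw [if_neg (Nat.succ_ne_zero k)] at h
      have : ∑ j ∈ range (k+2), (-1:ℝ)^(k+1+j) * ((k+1).choose j) * (j:ℝ)^0
          = (-1:ℝ)^(k+1) * ∑ j ∈ range (k+2), (-1:ℝ)^j * ((k+1).choose j) := by
        rw [Finset.mul_sum]; apply Finset.sum_congr rfl; intro j _; rw [pow_add]; ring
      rw [this]
      have : ∑ j ∈ range (k+2), (-1:ℝ)^j * ((k+1).choose j) = 0 := by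
        exact_mod_cast congrArg (Int.cast : ℤ → ℝ) h
      rw [this]; ring
  | succ m ih =>
    intro k
    cases k with
    | zero =>
      simp [S, T]
    | succ k =>
      rw [T_succ]
      have hS : (S (m+1) (k+1) : ℝ) = (k+1) * S m (k+1) + S m k := by
        simp only [S]; push_cast; ring
      have e1 := ih (k+1)
      have e2 := ih k
      have hf : ((k+1).factorial : ℝ) = (k+1) * k.factorial := by
        rw [Nat.factorial_succ]; push_cast; ring
      rw [hf] at e1 ⊢
      push_cast at hS ⊢
      rw [hS]
      nlinarith [e1, e2]

lemma sum_pascal (k P : ℕ) (s : ℝ) :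
    ∑ j ∈ range (k+1), (-1:ℝ)^(k+j) * (k.choose j) * ((s+1+j)^P - (s+j)^P)
      = ∑ j ∈ range (k+2), (-1:ℝ)^(k+1+j) * ((k+1).choose j) * (s+j)^P := by
  have hR := Finset.sum_range_succ'
      (fun j => (-1:ℝ)^(k+1+j) * ((k+1).choose j) * (s+j)^P) (k+1)
  rw [hR]
  simp only [mul_sub]
  rw [Finset.sum_sub_distrib]
  have hL2 := Finset.sum_range_succ'
      (fun j => (-1:ℝ)^(k+j) * (k.choose j) * (s+j)^P) k
  rw [hL2]
  have hext : ∑ i ∈ range k, (-1:ℝ)^(k+(i+1)) * (k.choose (i+1)) * (s+(i+1:ℕ))^P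
      = ∑ i ∈ range (k+1), (-1:ℝ)^(k+(i+1)) * (k.choose (i+1)) * (s+(i+1:ℕ))^P := by
    rw [Finset.sum_range_succ]
    simp [Nat.choose_eq_zero_of_lt (Nat.lt_succ_self k)]
  rw [hext]
  have congrsum : ∀ i ∈ range (k+1),
      (-1:ℝ)^(k+i) * (k.choose i) * (s+1+i)^P
        - (-1:ℝ)^(k+(i+1)) * (k.choose (i+1)) * (s+(i+1:ℕ))^P
      = (-1:ℝ)^(k+1+(i+1)) * ((k+1).choose (i+1)) * (s+(i+1:ℕ))^P := by
    intro i _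
    have hch : (((k+1).choose (i+1) : ℕ) : ℝ) = (k.choose i) + (k.choose (i+1)) := by
      rw [Nat.choose_succ_succ]; push_cast; ring
    rw [hch]
    have e1 : (-1:ℝ)^(k+1+(i+1)) = (-1:ℝ)^(k+i) := by
      rw [show k+1+(i+1) = (k+i)+2 by ring, pow_add]; norm_num
    have e2 : (-1:ℝ)^(k+(i+1)) = -(-1:ℝ)^(k+i) := by
      rw [show k+(i+1) = (k+i)+1 by ring, pow_add]; ring
    have e3 : s+1+(i:ℝ) = s+((i+1:ℕ):ℝ) := by push_cast; ring
    rw [e1, e2, e3]; ring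
  have hAB : ∑ x ∈ range (k+1), (-1:ℝ)^(k+x) * (k.choose x) * (s+1+x)^P
        - ∑ i ∈ range (k+1), (-1:ℝ)^(k+(i+1)) * (k.choose (i+1)) * (s+(i+1:ℕ))^P
      = ∑ i ∈ range (k+1), (-1:ℝ)^(k+1+(i+1)) * ((k+1).choose (i+1)) * (s+(i+1:ℕ))^P := by
    rw [← Finset.sum_sub_distrib]
    exact Finset.sum_congr rfl congrsum
  have hc : (-1:ℝ)^(k+0) * (k.choose 0) * (s+(0:ℕ))^P
      = -((-1:ℝ)^(k+1+0) * ((k+1).choose 0) * (s+(0:ℕ))^P) := by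
    simp [pow_succ]
  push_cast at hAB hc ⊢
  linarith [hAB, hc]

/-- Iterated integral `∫_{[0,1]^k} (s + u₁ + ⋯ + u_k)^n du`. -/
noncomputable def F (n : ℕ) : ℕ → ℝ → ℝ
  | 0 => fun s => s ^ n
  | (k+1) => fun s => ∫ u in s..(s+1), F n k u

lemma F_eq (n : ℕ) : ∀ (k : ℕ) (s : ℝ), F n k s
    = ((n.factorial : ℝ) / ((n+k).factorial)) *
        ∑ j ∈ range (k+1), (-1:ℝ)^(k+j) * (k.choose j) * (s+j)^(n+k) := by
  intro k
  induction k with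
  | zero => intro s; simp [F, div_self (by positivity : (n.factorial:ℝ) ≠ 0)]
  | succ k ih =>
    intro s
    have step : F n (k+1) s = ∫ u in s..(s+1), ((n.factorial : ℝ) / ((n+k).factorial)) *
        ∑ j ∈ range (k+1), (-1:ℝ)^(k+j) * (k.choose j) * (u+j)^(n+k) := by
      show (∫ u in s..(s+1), F n k u) = _
      apply intervalIntegral.integral_congr
      intro u _
      exact ih u
    rw [step]
    rw [intervalIntegral.integral_const_mul]
    rw [intervalIntegral.integral_finset_sum]
    swap
    · intro j _
      apply Continuous.intervalIntegrable
      fun_prop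
    have inner : ∀ j ∈ range (k+1),
        (∫ u in s..(s+1), (-1:ℝ)^(k+j) * (k.choose j) * (u+j)^(n+k))
        = (-1:ℝ)^(k+j) * (k.choose j) *
            (((s+1+j)^(n+k+1) - (s+j)^(n+k+1)) / (n+k+1)) := by
      intro j _
      rw [intervalIntegral.integral_const_mul]
      congr 1
      have := intervalIntegral.integral_comp_add_right (a := s) (b := s+1)
        (fun x => x ^ (n+k)) (j : ℝ)
      rw [this, integral_pow]
      push_cast
      ring_nf
    rw [Finset.sum_congr rfl inner]
    have hfac : ((n+(k+1)).factorial : ℝ) = ((n+k).factorial) * (n+k+1) := by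
      rw [show n+(k+1) = (n+k)+1 by ring, Nat.factorial_succ]; push_cast; ring
    rw [hfac]
    simp only [show n+(k+1) = n+k+1 from by ring]
    rw [← sum_pascal k (n+k+1) s]
    have hne1 : ((n+k).factorial : ℝ) ≠ 0 := by positivity
    have hne2 : ((n:ℝ)+k+1) ≠ 0 := by positivity
    rw [Finset.mul_sum, Finset.mul_sum]
    apply Finset.sum_congr rfl
    intro j _
    field_simp

lemma F_cont (n k : ℕ) : Continuous (F n k) := by
  have : F n k = fun s => ((n.factorial : ℝ) / ((n+k).factorial)) *
      ∑ j ∈ range (k+1), (-1:ℝ)^(k+j) * (k.choose j) * (s+j)^(n+k) := by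
    funext s; exact F_eq n k s
  rw [this]
  fun_prop

lemma F_nonneg (n : ℕ) : ∀ (k : ℕ) (s : ℝ), 0 ≤ s → 0 ≤ F n k s := by
  intro k
  induction k with
  | zero => intro s hs; exact pow_nonneg hs n
  | succ k ih =>
    intro s hs
    show 0 ≤ ∫ u in s..(s+1), F n k u
    apply intervalIntegral.integral_nonneg (by linarith)
    intro u hu
    exact ih u (by cases hu; linarith)

lemma cs_int (f g h : ℝ → ℝ) (a b : ℝ) (hab : a ≤ b)
    (hf : Continuous f) (hg : Continuous g) (hh : Continuous h)
    (hfn : ∀ u ∈ Set.Icc a b, 0 ≤ f u) (hgn : ∀ u ∈ Set.Icc a b, 0 ≤ g u)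
    (hhn : ∀ u ∈ Set.Icc a b, 0 ≤ h u)
    (hsq : ∀ u ∈ Set.Icc a b, g u ^ 2 ≤ f u * h u) :
    (∫ u in a..b, g u)^2 ≤ (∫ u in a..b, f u) * (∫ u in a..b, h u) := by
  set A := ∫ u in a..b, f u with hAdef
  set B := ∫ u in a..b, g u with hBdef
  set C := ∫ u in a..b, h u with hCdef
  have hA : 0 ≤ A := intervalIntegral.integral_nonneg hab hfn
  have hB : 0 ≤ B := intervalIntegral.integral_nonneg hab hgn
  have hC : 0 ≤ C := intervalIntegral.integral_nonneg hab hhn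
  have key : ∀ t : ℝ, 0 < t → 2*t*B ≤ t^2*A + C := by
    intro t ht
    have c1 : Continuous (fun u => 2*t*g u) := by fun_prop
    have c2 : Continuous (fun u => t^2 * f u + h u) := by fun_prop
    have hmono : (∫ u in a..b, 2*t*g u) ≤ ∫ u in a..b, (t^2 * f u + h u) := by
      apply intervalIntegral.integral_mono_on hab
        (c1.intervalIntegrable a b) (c2.intervalIntegrable a b)
      · intro u hu
        have h1 := hfn u hu
        have h2 := hgn u hu
        have h3 := hhn u hu
        have h4 := hsq u hu
        rcases le_or_gt (h u) 0 with hh0 | hh0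
        · have hh0' : h u = 0 := le_antisymm hh0 h3
          have hg0 : g u = 0 := by nlinarith
          rw [hg0, hh0']
          nlinarith
        · nlinarith [sq_nonneg (t * g u - h u), mul_le_mul_of_nonneg_left h4 (sq_nonneg t)]
    have e1 : (∫ u in a..b, 2*t*g u) = 2*t*B := by
      rw [hBdef, ← intervalIntegral.integral_const_mul]
    have c3 : Continuous (fun u => t^2 * f u) := by fun_prop
    have e2 : (∫ u in a..b, (t^2 * f u + h u)) = t^2*A + C := by
      rw [intervalIntegral.integral_add
            (c3.intervalIntegrable a b) (hh.intervalIntegrable a b),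
          intervalIntegral.integral_const_mul]
    rw [e1, e2] at hmono
    exact hmono
  rcases eq_or_lt_of_le hB with hB0 | hB0
  · have : B^2 = 0 := by rw [← hB0]; ring
    rw [this]; exact mul_nonneg hA hC
  · rcases eq_or_lt_of_le hA with hA0 | hA0
    · exfalso
      have ht : 0 < (C+1)/(2*B) := by positivity
      have hk := key _ ht
      rw [← hA0] at hk
      have e : 2*((C+1)/(2*B))*B = C+1 := by field_simp
      rw [e] at hk
      nlinarith
    · have := key (B/A) (by positivity)
      have h2 : 2*(B/A)*B = 2*(B^2/A) := by ring
      have h3 : (B/A)^2*A = B^2/A := by field_simp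
      rw [h2, h3] at this
      have : B^2/A ≤ C := by linarith
      calc B^2 = (B^2/A)*A := by field_simp
        _ ≤ C*A := mul_le_mul_of_nonneg_right this hA
        _ = A*C := by ring

lemma F_logconvex (n : ℕ) : ∀ (k : ℕ) (s : ℝ), 0 ≤ s →
    F (n+1) k s ^ 2 ≤ F n k s * F (n+2) k s := by
  intro k
  induction k with
  | zero =>
    intro s hs
    apply le_of_eq
    show ((s^(n+1))^2 : ℝ) = s^n * s^(n+2)
    rw [← pow_mul, ← pow_add]
    congr 1; ring
  | succ k ih =>
    intro s hs
    show (∫ u in s..(s+1), F (n+1) k u)^2 ≤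
        (∫ u in s..(s+1), F n k u) * (∫ u in s..(s+1), F (n+2) k u)
    apply cs_int _ _ _ _ _ (by linarith) (F_cont n k) (F_cont (n+1) k) (F_cont (n+2) k)
    · intro u hu; exact F_nonneg n k u (by cases hu; linarith)
    · intro u hu; exact F_nonneg (n+1) k u (by cases hu; linarith)
    · intro u hu; exact F_nonneg (n+2) k u (by cases hu; linarith)
    · intro u hu; exact ih u (by cases hu; linarith)

lemma F_val (n k : ℕ) : F n k 0 = (S (n+k) k : ℝ) / ((n+k).choose k : ℝ) := by
  have h := F_eq n k 0
  have hT : ∑ j ∈ range (k+1), (-1:ℝ)^(k+j) * (k.choose j) * ((0:ℝ)+j)^(n+k)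
      = T (n+k) k := by
    unfold T
    apply Finset.sum_congr rfl
    intro j _
    rw [zero_add]
  rw [hT, ← S_formula (n+k) k] at h
  have hch : (((n+k).choose k : ℕ) : ℝ) = ((n+k).factorial : ℝ) / ((k.factorial : ℝ) * (n.factorial : ℝ)) := by
    rw [Nat.cast_choose ℝ (Nat.le_add_left k n)]
    congr 2
    simp
  rw [h, hch]
  have h1 : ((n+k).factorial : ℝ) ≠ 0 := by positivity
  have h2 : (k.factorial : ℝ) ≠ 0 := by positivity
  have h3 : (n.factorial : ℝ) ≠ 0 := by positivity
  field_simp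

/-- The sequence `n ↦ S(n+k,k)/C(n+k,k)` is logarithmically convex. -/
theorem stirling2_ratio_log_convex (k : ℕ) (hk : 1 ≤ k) (ℓ : ℕ) :
    ((S (ℓ + k + 1) k : ℚ) / ((ℓ + k + 1).choose k : ℚ)) ^ 2 ≤
      ((S (ℓ + k + 2) k : ℚ) / ((ℓ + k + 2).choose k : ℚ)) *
        ((S (ℓ + k) k : ℚ) / ((ℓ + k).choose k : ℚ)) := by
  have h := F_logconvex ℓ k 0 le_rfl
  rw [F_val ℓ k, F_val (ℓ+1) k, F_val (ℓ+2) k] at h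
  have e1 : ℓ + 1 + k = ℓ + k + 1 := by ring
  have e2 : ℓ + 2 + k = ℓ + k + 2 := by ring
  rw [e1, e2] at h
  rw [mul_comm] at h
  have hc1 : (0:ℝ) < ((ℓ + k + 1).choose k : ℝ) := by
    exact_mod_cast Nat.cast_pos.mpr (Nat.choose_pos (by omega))
  have hcast : ((((S (ℓ + k + 1) k : ℚ) / ((ℓ + k + 1).choose k : ℚ)) ^ 2 : ℚ) : ℝ) ≤
      ((((S (ℓ + k + 2) k : ℚ) / ((ℓ + k + 2).choose k : ℚ)) *
        ((S (ℓ + k) k : ℚ) / ((ℓ + k).choose k : ℚ)) : ℚ) : ℝ) := by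
    push_cast
    exact h
  exact_mod_cast hcast
end

section
/- For any fixed integer k ≥ 1 and nonnegative integers a_1,…,a_m, the m×m matrix with (i,j)-entry (-1)^{a_i+a_j} · S(a_i+a_j+k, k)/C(a_i+a_j+k, k) has nonnegative determinant. -/
open MeasureTheory
open scoped Nat

section Aux

lemma S_eq_zero_of_lt : ∀ {n k : ℕ}, n < k → S n k = 0 := by
  intro n
  induction n with
  | zero => intro k hk; cases k with
    | zero => omega
    | succ k => simp [S]
  | succ n ih =>
    intro k hk
    cases k with
    | zero => omega
    | succ k =>
      have h1 : n < k + 1 := by omega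
      have h2 : n < k := by omega
      simp [S, ih h1, ih h2]

/-- `(k+1) S(N,k+1) = ∑_{j<N} C(N,j) S(j,k)` -/
lemma S_rec_sum : ∀ (N k : ℕ), (k + 1) * S N (k + 1) =
    ∑ j ∈ Finset.range N, N.choose j * S j k := by
  intro N
  induction N with
  | zero => intro k; simp [S]
  | succ N ih =>
    intro k
    have expand : ∑ j ∈ Finset.range (N + 1), (N + 1).choose j * S j k
        = (∑ j ∈ Finset.range N, N.choose j * S j k) + S N k
          + ∑ i ∈ Finset.range N, N.choose i * S (i + 1) k := by
      have h1 : ∀ j ∈ Finset.range (N+1), (N + 1).choose j * S j k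
          = N.choose j * S j k + (if h : j = 0 then 0 else N.choose (j-1) * S j k) := by
        intro j hj
        cases j with
        | zero => simp
        | succ j => simp [Nat.choose_succ_succ, Nat.add_mul, Nat.add_comm]
      rw [Finset.sum_congr rfl h1, Finset.sum_add_distrib, Finset.sum_range_succ,
        Nat.choose_self, one_mul, Finset.sum_range_succ']
      simp
    rw [expand]
    cases k with
    | zero =>
      have h3 : ∀ i ∈ Finset.range N, N.choose i * S (i + 1) 0 = 0 := by
        intro i _; simp [S]
      rw [Finset.sum_eq_zero h3]
      have : S (N + 1) 1 = 1 * S N 1 + S N 0 := rfl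
      have h4 := ih 0
      simp only [Nat.zero_add, Nat.one_mul, Nat.add_zero] at this h4 ⊢
      omega
    | succ k' =>
      have h3 : ∀ i ∈ Finset.range N, N.choose i * S (i + 1) (k' + 1)
          = (k' + 1) * (N.choose i * S i (k' + 1)) + N.choose i * S i k' := by
        intro i _
        show N.choose i * ((k' + 1) * S i (k' + 1) + S i k') = _
        ring
      rw [Finset.sum_congr rfl h3, Finset.sum_add_distrib, ← Finset.mul_sum,
        ← ih (k' + 1), ← ih k']
      have : S (N + 1) (k' + 1 + 1) = (k' + 1 + 1) * S N (k' + 1 + 1) + S N (k' + 1) := rfl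
      rw [this]
      ring
/-- key binomial identity -/
lemma choose_id (n k m : ℕ) (hm : m ≤ n) :
    ((n+1).choose m : ℝ) * ((k + 1) * ((n+k+1).choose (k + 1))) =
      (n+1) * (((n+k+1).choose (m + k)) * ((m + k).choose k)) := by
  obtain ⟨d, rfl⟩ : ∃ d, n = m + d := ⟨n - m, by omega⟩
  have c1 : ((m + d + 1).choose m : ℝ) = (m + d + 1) ! / (m ! * (d + 1) !) := by
    rw [Nat.cast_choose ℝ (by omega), show m + d + 1 - m = d + 1 from by omega]
  have c2 : ((m + d + k + 1).choose (k + 1) : ℝ) = (m + d + k + 1) ! / ((k + 1) ! * (m + d) !) := by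
    rw [Nat.cast_choose ℝ (by omega), show m + d + k + 1 - (k + 1) = m + d from by omega]
  have c3 : ((m + d + k + 1).choose (m + k) : ℝ) = (m + d + k + 1) ! / ((m + k) ! * (d + 1) !) := by
    rw [Nat.cast_choose ℝ (by omega), show m + d + k + 1 - (m + k) = d + 1 from by omega]
  have c4 : ((m + k).choose k : ℝ) = (m + k) ! / (k ! * m !) := by
    rw [Nat.cast_choose ℝ (by omega), show m + k - k = m from by omega]
  rw [c1, c2, c3, c4]
  have f1 : ((m + d + 1) ! : ℝ) = (m + d + 1) * (m + d) ! := by exact_mod_cast Nat.factorial_succ (m + d)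
  have f2 : ((k + 1) ! : ℝ) = (k + 1) * k ! := by exact_mod_cast Nat.factorial_succ k
  rw [f1, f2]
  have h1 : ((m + d) ! : ℝ) ≠ 0 := Nat.cast_ne_zero.2 (Nat.factorial_ne_zero _)
  have h2 : (k ! : ℝ) ≠ 0 := Nat.cast_ne_zero.2 (Nat.factorial_ne_zero _)
  have h3 : (m ! : ℝ) ≠ 0 := Nat.cast_ne_zero.2 (Nat.factorial_ne_zero _)
  have h4 : ((d + 1) ! : ℝ) ≠ 0 := Nat.cast_ne_zero.2 (Nat.factorial_ne_zero _)
  have h5 : ((m + k) ! : ℝ) ≠ 0 := Nat.cast_ne_zero.2 (Nat.factorial_ne_zero _)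
  have h6 : ((k:ℝ)+1) ≠ 0 := by positivity
  field_simp
  push_cast; ring

/-- splitting a range sum -/
lemma sum_range_split (f : ℕ → ℝ) (k s : ℕ) :
    ∑ j ∈ Finset.range (k + s), f j
      = (∑ j ∈ Finset.range k, f j) + ∑ i ∈ Finset.range s, f (k + i) := by
  induction s with
  | zero => simp
  | succ s ih => rw [← Nat.add_assoc, Finset.sum_range_succ, ih, Finset.sum_range_succ]; ring
noncomputable def μcube (k : ℕ) : Measure (Fin k → ℝ) :=
  Measure.pi fun _ => volume.restrict (Set.Icc 0 1)

instance : IsProbabilityMeasure ((volume : Measure ℝ).restrict (Set.Icc 0 1)) := by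
  constructor
  rw [Measure.restrict_apply_univ, Real.volume_Icc]
  norm_num

instance (k : ℕ) : IsProbabilityMeasure (μcube k) := by
  unfold μcube; infer_instance

lemma ae_mem_cube (k : ℕ) :
    ∀ᵐ x ∂(μcube k), x ∈ Set.pi Set.univ (fun _ : Fin k => Set.Icc (0:ℝ) 1) := by
  have hms : MeasurableSet (Set.pi Set.univ (fun _ : Fin k => Set.Icc (0:ℝ) 1)) :=
    MeasurableSet.univ_pi fun _ => measurableSet_Icc
  rw [ae_iff]
  have : μcube k (Set.pi Set.univ (fun _ : Fin k => Set.Icc (0:ℝ) 1)) = 1 := by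
    rw [μcube, Measure.pi_pi]
    rw [Finset.prod_congr rfl fun i _ => Measure.restrict_apply_self _ (Set.Icc (0:ℝ) 1)]
    simp [Real.volume_Icc]
  have hcompl := measure_compl hms (measure_ne_top (μcube k) _)
  rw [measure_univ, this, tsub_self] at hcompl
  exact hcompl

lemma integrable_aux (k : ℕ) (g : ℝ → ℝ) (hg : Continuous g) :
    Integrable (fun x : Fin k → ℝ => g (∑ i, x i)) (μcube k) := by
  obtain ⟨C, hC⟩ := (isCompact_Icc (a := (0:ℝ)) (b := k)).exists_bound_of_continuousOn
    hg.continuousOn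
  refine ⟨(hg.comp (continuous_finset_sum _ fun i _ => continuous_apply i)).aestronglyMeasurable,
    HasFiniteIntegral.of_bounded (C := C) ?_⟩
  filter_upwards [ae_mem_cube k] with x hx
  apply hC
  constructor
  · exact Finset.sum_nonneg fun i _ => (hx i trivial).1
  · calc ∑ i, x i ≤ ∑ _i : Fin k, (1:ℝ) := Finset.sum_le_sum fun i _ => (hx i trivial).2
      _ = k := by simp

lemma ae_mem_prod (k : ℕ) :
    ∀ᵐ z ∂(((volume : Measure ℝ).restrict (Set.Icc 0 1)).prod (μcube k)),
      z.1 ∈ Set.Icc (0:ℝ) 1 ∧ z.2 ∈ Set.pi Set.univ (fun _ : Fin k => Set.Icc (0:ℝ) 1) := by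
  set ν := (volume : Measure ℝ).restrict (Set.Icc 0 1)
  have hs : ν (Set.Icc (0:ℝ) 1)ᶜ = 0 := by
    rw [Measure.restrict_apply (measurableSet_Icc.compl)]
    simp
  have ht : μcube k (Set.pi Set.univ (fun _ : Fin k => Set.Icc (0:ℝ) 1))ᶜ = 0 := by
    have := ae_mem_cube k
    rwa [ae_iff] at this
  rw [ae_iff]
  refine measure_mono_null (t := (Set.Icc (0:ℝ) 1)ᶜ ×ˢ (Set.univ : Set (Fin k → ℝ))
      ∪ (Set.univ : Set ℝ) ×ˢ (Set.pi Set.univ (fun _ : Fin k => Set.Icc (0:ℝ) 1))ᶜ) ?_ ?_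
  · intro z hz
    simp only [Set.mem_setOf_eq, not_and_or] at hz
    rcases hz with h | h
    · exact Or.inl ⟨h, trivial⟩
    · exact Or.inr ⟨trivial, h⟩
  · apply measure_union_null
    · rw [Measure.prod_prod, hs, zero_mul]
    · rw [Measure.prod_prod, ht, mul_zero]

lemma integrable_prod_aux (k : ℕ) (g : ℝ → ℝ) (hg : Continuous g) :
    Integrable (fun z : ℝ × (Fin k → ℝ) => g (z.1 + ∑ i, z.2 i))
      (((volume : Measure ℝ).restrict (Set.Icc 0 1)).prod (μcube k)) := by
  obtain ⟨C, hC⟩ := (isCompact_Icc (a := (0:ℝ)) (b := (k:ℝ)+1)).exists_bound_of_continuousOn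
    hg.continuousOn
  refine ⟨(hg.comp (continuous_fst.add (continuous_finset_sum _
    fun i _ => (continuous_apply i).comp continuous_snd))).aestronglyMeasurable,
    HasFiniteIntegral.of_bounded (C := C) ?_⟩
  filter_upwards [ae_mem_prod k] with z hz
  apply hC
  constructor
  · have : (0:ℝ) ≤ ∑ i, z.2 i := Finset.sum_nonneg fun i _ => (hz.2 i trivial).1
    linarith [hz.1.1]
  · have h2 : ∑ i, z.2 i ≤ (k:ℝ) := by
      calc ∑ i, z.2 i ≤ ∑ _i : Fin k, (1:ℝ) := Finset.sum_le_sum fun i _ => (hz.2 i trivial).2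
        _ = k := by simp
    linarith [hz.1.2]

lemma S_int : ∀ (k n : ℕ),
    ∫ x, (∑ i, x i)^n ∂(μcube k) = (S (n+k) k : ℝ) / ((n+k).choose k : ℝ) := by
  intro k
  induction k with
  | zero =>
    intro n
    have h0 : ∀ x : Fin 0 → ℝ, (∑ i, x i)^n = (0:ℝ)^n := by
      intro x; simp
    rw [integral_congr_ae (Filter.Eventually.of_forall h0), integral_const]
    simp only [measure_univ, ENNReal.toReal_one, probReal_univ, one_smul]
    cases n with
    | zero => simp [S]
    | succ n => simp [S, S_eq_zero_of_lt]
  | succ k ih =>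
    intro n
    -- transfer to product measure
    set ν := (volume : Measure ℝ).restrict (Set.Icc 0 1) with hν
    have hmp := measurePreserving_piFinSuccAbove
      (fun _ : Fin (k+1) => (volume : Measure ℝ).restrict (Set.Icc 0 1)) 0
    set e := MeasurableEquiv.piFinSuccAbove (fun _ : Fin (k+1) => ℝ) 0 with he
    have step1 : ∫ x, (∑ i, x i)^n ∂(μcube (k+1))
        = ∫ z, (z.1 + ∑ i, z.2 i)^n ∂(ν.prod (μcube k)) := by
      have := hmp.integral_comp e.measurableEmbedding
        (fun z : ℝ × (Fin k → ℝ) => (z.1 + ∑ i, z.2 i)^n)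
      unfold μcube
      rw [hν]
      rw [← this]
      apply integral_congr_ae (Filter.Eventually.of_forall _)
      intro x
      have : (e x).1 + ∑ i, (e x).2 i = ∑ i, x i := by
        rw [Fin.sum_univ_succAbove x 0]
        rfl
      rw [this]
    have step2 : ∫ z, (z.1 + ∑ i, z.2 i)^n ∂(ν.prod (μcube k))
        = ∫ s : Fin k → ℝ, ((1 + ∑ i, s i)^(n+1) - (∑ i, s i)^(n+1))/(n+1) ∂(μcube k) := by
      rw [integral_prod_symm _ (integrable_prod_aux k (·^n) (continuous_pow n))]
      apply integral_congr_ae (Filter.Eventually.of_forall _)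
      intro s
      have h0 : ∫ t, (t + ∑ i, s i)^n ∂ν
          = ∫ t in Set.Icc (0:ℝ) 1, (t + ∑ i, s i)^n := rfl
      rw [h0, integral_Icc_eq_integral_Ioc,
        ← intervalIntegral.integral_of_le (by norm_num : (0:ℝ) ≤ 1),
        intervalIntegral.integral_comp_add_right (fun u => u^n) (∑ i, s i), integral_pow]
      norm_num
    rw [step1, step2]
    have hint1 : Integrable (fun s : Fin k → ℝ => (1 + ∑ i, s i)^(n+1)) (μcube k) :=
      integrable_aux k (fun y => (1+y)^(n+1)) (by continuity)
    have hint2 : Integrable (fun s : Fin k → ℝ => (∑ i, s i)^(n+1)) (μcube k) :=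
      integrable_aux k (·^(n+1)) (continuous_pow _)
    rw [integral_div, integral_sub hint1 hint2]
    have hA : ∫ s : Fin k → ℝ, (1 + ∑ i, s i)^(n+1) ∂(μcube k)
        = ∑ m ∈ Finset.range (n+2), (S (m+k) k : ℝ)/((m+k).choose k) * ((n+1).choose m) := by
      have hpt : ∀ s : Fin k → ℝ, (1 + ∑ i, s i)^(n+1)
          = ∑ m ∈ Finset.range (n+2), (∑ i, s i)^m * ((n+1).choose m : ℝ) := by
        intro s
        rw [add_comm (1:ℝ), add_pow]
        simp
      rw [integral_congr_ae (.of_forall hpt), integral_finset_sum _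
        (fun m _ => (integrable_aux k (·^m) (continuous_pow m)).mul_const _)]
      refine Finset.sum_congr rfl fun m _ => ?_
      rw [integral_mul_const, ih m]
    rw [hA, ih (n+1), Finset.sum_range_succ, Nat.choose_self, Nat.cast_one, mul_one,
      add_sub_cancel_right]
    -- now the combinatorial identity
    have key : ((k:ℝ)+1) * (S (n+k+1) (k+1) : ℝ)
        = ∑ m ∈ Finset.range (n+1), ((n+k+1).choose (k+m) : ℝ) * (S (k+m) k : ℝ) := by
      have h := S_rec_sum (n+k+1) k
      have hR : ((k:ℝ)+1) * (S (n+k+1) (k+1) : ℝ)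
          = ∑ j ∈ Finset.range (n+k+1), ((n+k+1).choose j : ℝ) * (S j k : ℝ) := by
        exact_mod_cast congrArg (Nat.cast (R := ℝ)) h
      rw [hR, show n+k+1 = k+(n+1) from by omega, sum_range_split]
      have hz : ∑ j ∈ Finset.range k, ((k+(n+1)).choose j : ℝ) * (S j k : ℝ) = 0 := by
        apply Finset.sum_eq_zero
        intro j hj
        rw [S_eq_zero_of_lt (Finset.mem_range.1 hj)]
        simp
      rw [hz, zero_add]
    have hCmk : ∀ m : ℕ, (((m+k).choose k : ℕ) : ℝ) ≠ 0 := fun m =>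
      Nat.cast_ne_zero.2 (Nat.choose_pos (Nat.le_add_left k m)).ne'
    have hC1 : (((n+k+1).choose (k+1) : ℕ) : ℝ) ≠ 0 :=
      Nat.cast_ne_zero.2 (Nat.choose_pos (by omega)).ne'
    have hn1 : ((n:ℝ)+1) ≠ 0 := by positivity
    have hk1 : ((k:ℝ)+1) ≠ 0 := by positivity
    have sumeq : ∑ m ∈ Finset.range (n+1), (S (m+k) k : ℝ)/((m+k).choose k) * ((n+1).choose m)
        = ((n:ℝ)+1) * ((S (n+k+1) (k+1) : ℝ) / (((n+k+1).choose (k+1) : ℕ) : ℝ)) := by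
      have termwise : ∀ m ∈ Finset.range (n+1),
          (S (m+k) k : ℝ)/((m+k).choose k) * ((n+1).choose m)
          = ((n+k+1).choose (k+m) : ℝ) * (S (k+m) k : ℝ)
              * (((n:ℝ)+1) / (((k:ℝ)+1) * (((n+k+1).choose (k+1) : ℕ) : ℝ))) := by
        intro m hm
        have hm' : m ≤ n := by
          have := Finset.mem_range.1 hm; omega
        have hid := choose_id n k m hm'
        rw [show k+m = m+k from by omega]
        rw [div_mul_eq_mul_div, ← mul_div_assoc,
          div_eq_div_iff (hCmk m) (mul_ne_zero hk1 hC1)]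
        linear_combination (S (m+k) k : ℝ) * hid
      rw [Finset.sum_congr rfl termwise, ← Finset.sum_mul, ← key]
      field_simp
    rw [sumeq]
    rw [show n+(k+1) = n+k+1 from by omega]
    field_simp

end Aux

/-- The matrix with entries `(-1)^{a_i+a_j} S(a_i+a_j+k,k)/C(a_i+a_j+k,k)` has nonnegative
determinant. -/
theorem stirling2_signed_ratio_matrix_det_nonneg (k : ℕ) (hk : 1 ≤ k) (m : ℕ)
    (a : Fin m → ℕ) :
    0 ≤ (Matrix.of fun i j : Fin m =>
          (-1 : ℝ) ^ (a i + a j) *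
            ((S (a i + a j + k) k : ℝ) / ((a i + a j + k).choose k : ℝ))).det := by
  set M : Matrix (Fin m) (Fin m) ℝ := Matrix.of fun i j : Fin m =>
      (-1 : ℝ) ^ (a i + a j) *
        ((S (a i + a j + k) k : ℝ) / ((a i + a j + k).choose k : ℝ)) with hM
  have entry : ∀ i j, M i j
      = ∫ x : Fin k → ℝ, ((-(∑ t, x t))^(a i) * (-(∑ t, x t))^(a j)) ∂(μcube k) := by
    intro i j
    have hpt : ∀ x : Fin k → ℝ, (-(∑ t, x t))^(a i) * (-(∑ t, x t))^(a j)
        = (-1:ℝ)^(a i + a j) * (∑ t, x t)^(a i + a j) := by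
      intro x
      rw [← pow_add, neg_pow]
    rw [integral_congr_ae (.of_forall hpt), integral_const_mul, S_int k (a i + a j)]
    rfl
  have hgint : ∀ (p q : ℕ),
      Integrable (fun x : Fin k → ℝ => (-(∑ t, x t))^p * (-(∑ t, x t))^q) (μcube k) :=
    fun p q => integrable_aux k (fun y => (-y)^p * (-y)^q) (by continuity)
  have hPSD : M.PosSemidef := by
    rw [Matrix.posSemidef_iff_dotProduct_mulVec]
    constructor
    · ext i j
      simp only [Matrix.conjTranspose_apply, hM, Matrix.of_apply, star_trivial]
      rw [add_comm (a j) (a i)]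
    · intro v
      have quad : dotProduct (star v) (M.mulVec v)
          = ∫ x : Fin k → ℝ, (∑ i, v i * (-(∑ t, x t))^(a i))^2 ∂(μcube k) := by
        have expand : ∀ x : Fin k → ℝ, (∑ i, v i * (-(∑ t, x t))^(a i))^2
            = ∑ i, ∑ j, v i * v j * ((-(∑ t, x t))^(a i) * (-(∑ t, x t))^(a j)) := by
          intro x
          rw [sq, Finset.sum_mul_sum]
          exact Finset.sum_congr rfl fun i _ => Finset.sum_congr rfl fun j _ => by ring
        rw [integral_congr_ae (.of_forall expand)]
        rw [integral_finset_sum _ (fun i _ => integrable_finset_sum _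
          (fun j _ => ((hgint (a i) (a j)).const_mul _)))]
        have inner : ∀ i : Fin m,
            ∫ x : Fin k → ℝ, (∑ j, v i * v j
                * ((-(∑ t, x t))^(a i) * (-(∑ t, x t))^(a j))) ∂(μcube k)
            = ∑ j, v i * v j * M i j := by
          intro i
          rw [integral_finset_sum _ (fun j _ => ((hgint (a i) (a j)).const_mul _))]
          exact Finset.sum_congr rfl fun j _ => by rw [integral_const_mul, entry i j]
        rw [Finset.sum_congr rfl fun i _ => inner i]
        simp only [dotProduct, Matrix.mulVec, star_trivial, Finset.mul_sum]
        exact Finset.sum_congr rfl fun i _ => Finset.sum_congr rfl fun j _ => by ring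
      rw [quad]
      exact integral_nonneg fun x => sq_nonneg _
  rw [hPSD.isHermitian.det_eq_prod_eigenvalues]
  apply Finset.prod_nonneg
  intro i _
  have := hPSD.eigenvalues_nonneg i
  exact_mod_cast this
end

section
/- For n ≥ k ≥ 1, the Bell polynomial identity B_{n,k}(1/2, 1/3, …, 1/(n−k+2)) = (n!/(n+k)!) · Σ_{i=0}^{k} (-1)^{k-i} · C(n+k, k−i) · S(n+i, i) holds. -/
/-- The partial Bell polynomial `B_{n,k}(x_1, …, x_{n-k+1})`, evaluated at `x : ℕ → ℚ` where
`x i` plays the role of `x_i`.  The sum is over tuples `(ℓ_1, …, ℓ_n)` of nonnegative integers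
(each necessarily at most `n`) with `∑ i·ℓ_i = n` and `∑ ℓ_i = k`. -/
def BellB (n k : ℕ) (x : ℕ → ℚ) : ℚ :=
  ∑ ℓ ∈ Finset.univ.filter (fun ℓ : Fin n → Fin (n + 1) =>
      (∑ i, (i.1 + 1) * (ℓ i).1) = n ∧ (∑ i, (ℓ i).1) = k),
    (n.factorial : ℚ) / ((∏ i, ((ℓ i).1.factorial) : ℕ) : ℚ) *
      ∏ i, (x (i.1 + 1) / ((i.1 + 1).factorial : ℚ)) ^ (ℓ i).1

open Finset PowerSeries

section Aux

lemma S_zero' (N : ℕ) : S N 0 = if N = 0 then 1 else 0 := by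
  cases N <;> simp [S]

lemma S_one' : ∀ N : ℕ, S (N + 1) 1 = 1 := by
  intro N
  induction N with
  | zero => rfl
  | succ N ih => show 1 * S (N + 1) 1 + S (N + 1) 0 = 1; rw [ih, S_zero']; simp

lemma stirling_conv (N : ℕ) : ∀ i, ∑ m ∈ range N, N.choose m * S m i = (i + 1) * S N (i + 1) := by
  induction N with
  | zero => intro i; simp [S]
  | succ N ih =>
    intro i
    have key : ∑ m ∈ range (N + 1), (N + 1).choose m * S m i
        = S 0 i + ∑ j ∈ range N, ((N.choose j + N.choose (j + 1)) * S (j + 1) i) := by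
      rw [Finset.sum_range_succ']
      simp [Nat.choose_succ_succ, add_comm]
    have e1 := Finset.sum_range_succ (fun m => N.choose m * S m i) N
    have e2 := Finset.sum_range_succ' (fun m => N.choose m * S m i) N
    simp only [Nat.choose_self, Nat.choose_zero_right, one_mul] at e1 e2
    rw [ih i] at e1
    have h2 : ∑ j ∈ range N, N.choose (j + 1) * S (j + 1) i + S 0 i
        = (i + 1) * S N (i + 1) + S N i := by omega
    cases i with
    | zero =>
      have h3 : ∀ j : ℕ, S (j + 1) 0 = 0 := fun j => rfl
      have h4 : ∑ j ∈ range N, ((N.choose j + N.choose (j + 1)) * S (j + 1) 0) = 0 := by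
        apply Finset.sum_eq_zero; intro j _; rw [h3]; ring
      rw [key, h4, S_one']
      simp [S]
    | succ i' =>
      have h3 : ∀ j : ℕ, S (j + 1) (i' + 1) = (i' + 1) * S j (i' + 1) + S j i' := fun j => rfl
      have h4 : ∑ j ∈ range N, N.choose j * S (j + 1) (i' + 1)
          = (i' + 1) * ((i' + 2) * S N (i' + 2)) + (i' + 1) * S N (i' + 1) := by
        calc ∑ j ∈ range N, N.choose j * S (j + 1) (i' + 1)
            = ∑ j ∈ range N, ((i' + 1) * (N.choose j * S j (i' + 1)) + N.choose j * S j i') := by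
              apply Finset.sum_congr rfl; intro j _; rw [h3]; ring
          _ = (i' + 1) * ∑ j ∈ range N, N.choose j * S j (i' + 1)
              + ∑ j ∈ range N, N.choose j * S j i' := by
              rw [Finset.sum_add_distrib, Finset.mul_sum]
          _ = _ := by rw [ih (i' + 1), ih i']
      have hsplit : ∑ j ∈ range N, ((N.choose j + N.choose (j + 1)) * S (j + 1) (i' + 1))
          = ∑ j ∈ range N, N.choose j * S (j + 1) (i' + 1)
            + ∑ j ∈ range N, N.choose (j + 1) * S (j + 1) (i' + 1) := by
        rw [← Finset.sum_add_distrib]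
        apply Finset.sum_congr rfl; intro j _; ring
      have h5 : S (N + 1) (i' + 2) = (i' + 2) * S N (i' + 2) + S N (i' + 1) := rfl
      have h0 : S 0 (i' + 1) = 0 := rfl
      rw [key, hsplit, h4, h5, h0]
      have h2' : ∑ j ∈ range N, N.choose (j + 1) * S (j + 1) (i' + 1)
          = (i' + 2) * S N (i' + 2) + S N (i' + 1) := by
        rw [h0, add_zero] at h2; exact h2
      rw [h2']
      ring

lemma coeff_expm1 (b : ℕ) :
    coeff b (exp ℚ - 1) = if b = 0 then 0 else 1 / (b.factorial : ℚ) := by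
  rw [map_sub, coeff_exp]
  cases b with
  | zero => simp
  | succ b => simp [coeff_one]

lemma coeff_expm1_pow (i : ℕ) : ∀ N, coeff N ((exp ℚ - 1) ^ i)
    = (i.factorial : ℚ) * (S N i : ℚ) / (N.factorial : ℚ) := by
  induction i with
  | zero =>
    intro N
    rw [pow_zero, coeff_one, S_zero']
    cases N with
    | zero => simp
    | succ N => simp
  | succ i ih =>
    intro N
    rw [pow_succ, coeff_mul, Finset.Nat.sum_antidiagonal_eq_sum_range_succ_mk]
    simp only [ih, coeff_expm1]
    rw [Finset.sum_range_succ]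
    rw [if_pos (Nat.sub_self N), mul_zero, add_zero]
    have hstep : ∀ m ∈ range N,
        (i.factorial : ℚ) * (S m i : ℚ) / (m.factorial : ℚ) *
          (if N - m = 0 then (0:ℚ) else 1 / ((N - m).factorial : ℚ))
        = (i.factorial : ℚ) / (N.factorial : ℚ) * ((N.choose m : ℚ) * (S m i : ℚ)) := by
      intro m hm
      rw [Finset.mem_range] at hm
      rw [if_neg (by omega)]
      rw [Nat.cast_choose ℚ (le_of_lt hm)]
      have h1 : (m.factorial : ℚ) ≠ 0 := Nat.cast_ne_zero.2 m.factorial_ne_zero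
      have h2 : ((N - m).factorial : ℚ) ≠ 0 := Nat.cast_ne_zero.2 (N - m).factorial_ne_zero
      have h3 : (N.factorial : ℚ) ≠ 0 := Nat.cast_ne_zero.2 N.factorial_ne_zero
      field_simp
    rw [Finset.sum_congr rfl hstep, ← Finset.mul_sum]
    have hc : ∑ m ∈ range N, (N.choose m : ℚ) * (S m i : ℚ)
        = ((i + 1) : ℚ) * (S N (i + 1) : ℚ) := by
      have := stirling_conv N i
      exact_mod_cast congrArg (Nat.cast : ℕ → ℚ) this
    rw [hc]
    have h3 : (N.factorial : ℚ) ≠ 0 := Nat.cast_ne_zero.2 N.factorial_ne_zero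
    rw [Nat.factorial_succ]
    push_cast
    field_simp

noncomputable def aQ (m : ℕ) : ℚ := if m = 0 then 0 else 1 / ((m + 1).factorial : ℚ)

noncomputable def fS : PowerSeries ℚ := PowerSeries.mk aQ

lemma X_mul_fS : X * fS = exp ℚ - 1 - X := by
  ext N
  rw [map_sub, map_sub, coeff_exp, coeff_one, coeff_X]
  cases N with
  | zero => simp [fS]
  | succ N =>
    rw [coeff_succ_X_mul, fS, coeff_mk, aQ]
    cases N with
    | zero => norm_num
    | succ N =>
      have : N + 1 + 1 ≠ 1 := by omega
      simp [this, Nat.succ_ne_zero]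

lemma coeff_fS_pow (n k : ℕ) : coeff n (fS ^ k)
    = ∑ i ∈ range (k + 1), (-1 : ℚ) ^ (k - i) * (k.choose i : ℚ) *
        ((i.factorial : ℚ) * (S (n + i) i : ℚ) / ((n + i).factorial : ℚ)) := by
  have h1 : coeff n (fS ^ k) = coeff (n + k) ((X : PowerSeries ℚ) ^ k * fS ^ k) := by
    rw [coeff_X_pow_mul]
  rw [h1, ← mul_pow, X_mul_fS]
  have h2 : (exp ℚ - 1 - X : PowerSeries ℚ) = (exp ℚ - 1) + (-X) := by ring
  rw [h2, add_pow, map_sum]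
  apply Finset.sum_congr rfl
  intro i hi
  rw [Finset.mem_range] at hi
  have e1 : ((exp ℚ - 1) ^ i * (-X) ^ (k - i) * ((k.choose i : ℕ) : PowerSeries ℚ))
      = C ((-1 : ℚ) ^ (k - i) * ((k.choose i : ℕ) : ℚ)) * (X ^ (k - i) * (exp ℚ - 1) ^ i) := by
    rw [map_mul, map_pow, map_natCast, map_neg, map_one]
    ring
  rw [e1, coeff_C_mul, show n + k = (n + i) + (k - i) by omega, coeff_X_pow_mul,
    coeff_expm1_pow]

noncomputable def PQ (n : ℕ) : PowerSeries ℚ := ∑ m ∈ range (n + 1), C (aQ m) * X ^ m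

lemma coeff_PQ (n b : ℕ) (hb : b ≤ n) : coeff b (PQ n) = aQ b := by
  rw [PQ, map_sum]
  rw [Finset.sum_eq_single b]
  · rw [coeff_C_mul, coeff_X_pow, if_pos rfl, mul_one]
  · intro m _ hm
    rw [coeff_C_mul, coeff_X_pow, if_neg (Ne.symm hm), mul_zero]
  · intro h
    exact absurd (Finset.mem_range.2 (by omega)) h

lemma coeff_sub_mul (n : ℕ) (h : PowerSeries ℚ) : coeff n ((fS - PQ n) * h) = 0 := by
  rw [coeff_mul]
  apply Finset.sum_eq_zero
  intro p hp
  have h1 : p.1 ≤ n := by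
    rw [Finset.HasAntidiagonal.mem_antidiagonal] at hp
    omega
  rw [map_sub, coeff_PQ n p.1 h1, fS, coeff_mk, sub_self, zero_mul]

lemma coeff_trunc (n k : ℕ) : coeff n (fS ^ k) = coeff n (PQ n ^ k) := by
  have h1 : fS = (fS - PQ n) + PQ n := by ring
  rw [h1, add_pow, map_sum, Finset.sum_range_succ']
  have h2 : ∀ j ∈ range k, coeff n ((fS - PQ n) ^ (j + 1) * PQ n ^ (k - (j + 1))
      * ((k.choose (j + 1) : ℕ) : PowerSeries ℚ)) = 0 := by
    intro j _
    rw [pow_succ', mul_assoc, mul_assoc, coeff_sub_mul]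
  rw [Finset.sum_eq_zero h2, zero_add, pow_zero, one_mul, Nat.sub_zero, Nat.choose_zero_right]
  push_cast
  rw [mul_one]

lemma coeff_PQ_pow (n k : ℕ) : coeff n (PQ n ^ k)
    = ∑ ℓ ∈ (piAntidiag (range (n + 1)) k).filter
        (fun ℓ => ∑ m ∈ range (n + 1), m * ℓ m = n),
      ((Nat.multinomial (range (n + 1)) ℓ : ℚ)) * ∏ m ∈ range (n + 1), aQ m ^ ℓ m := by
  rw [PQ, Finset.sum_pow_eq_sum_piAntidiag, map_sum, Finset.sum_filter]
  apply Finset.sum_congr rfl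
  intro ℓ _
  have e1 : ∏ m ∈ range (n + 1), (C (aQ m) * X ^ m) ^ ℓ m
      = C (∏ m ∈ range (n + 1), aQ m ^ ℓ m) * X ^ (∑ m ∈ range (n + 1), m * ℓ m) := by
    rw [map_prod, ← Finset.prod_pow_eq_pow_sum, ← Finset.prod_mul_distrib]
    apply Finset.prod_congr rfl
    intro m _
    rw [mul_pow, map_pow, pow_mul]
  rw [e1, ← map_natCast (C (R := ℚ)) (Nat.multinomial (range (n + 1)) ℓ), ← mul_assoc, ← map_mul,
    coeff_C_mul, coeff_X_pow]
  by_cases h : ∑ m ∈ range (n + 1), m * ℓ m = n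
  · rw [if_pos h, if_pos h.symm, mul_one]
  · rw [if_neg h, if_neg (fun hh => h hh.symm), mul_zero]

def Phi (n : ℕ) (ℓ : Fin n → Fin (n + 1)) : ℕ → ℕ :=
  fun m => if h : 1 ≤ m ∧ m ≤ n then (ℓ ⟨m - 1, by omega⟩ : ℕ) else 0

def Psi (n : ℕ) (ℓ' : ℕ → ℕ) : Fin n → Fin (n + 1) :=
  fun i => ⟨min (ℓ' (i.1 + 1)) n, by omega⟩

lemma shift_sum {M : Type*} [AddCommMonoid M] (n : ℕ) (ℓ : Fin n → Fin (n + 1))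
    (F : ℕ → ℕ → M) (h0 : F 0 0 = 0) :
    ∑ m ∈ range (n + 1), F m (Phi n ℓ m) = ∑ i : Fin n, F (i.1 + 1) ((ℓ i) : ℕ) := by
  rw [Finset.sum_range_succ']
  have h1 : Phi n ℓ 0 = 0 := by simp [Phi]
  rw [h1, h0, add_zero]
  rw [Finset.sum_range fun j => F (j + 1) (Phi n ℓ (j + 1))]
  apply Finset.sum_congr rfl
  intro i _
  have h2 : Phi n ℓ (i.1 + 1) = (ℓ i : ℕ) := by
    rw [Phi]
    rw [dif_pos ⟨by omega, by omega⟩]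
    congr
  rw [h2]

lemma shift_prod {M : Type*} [CommMonoid M] (n : ℕ) (ℓ : Fin n → Fin (n + 1))
    (F : ℕ → ℕ → M) (h0 : F 0 0 = 1) :
    ∏ m ∈ range (n + 1), F m (Phi n ℓ m) = ∏ i : Fin n, F (i.1 + 1) ((ℓ i) : ℕ) := by
  rw [Finset.prod_range_succ']
  have h1 : Phi n ℓ 0 = 0 := by simp [Phi]
  rw [h1, h0, mul_one]
  rw [Finset.prod_range fun j => F (j + 1) (Phi n ℓ (j + 1))]
  apply Finset.prod_congr rfl
  intro i _
  have h2 : Phi n ℓ (i.1 + 1) = (ℓ i : ℕ) := by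
    rw [Phi, dif_pos ⟨by omega, by omega⟩]
    congr
  rw [h2]

lemma bound_of_sum (n : ℕ) (ℓ' : ℕ → ℕ) (hc : ∑ m ∈ range (n + 1), m * ℓ' m = n)
    {i : ℕ} (hi : 1 ≤ i) (hin : i ≤ n) : ℓ' i ≤ n := by
  calc ℓ' i = 1 * ℓ' i := (one_mul _).symm
    _ ≤ i * ℓ' i := Nat.mul_le_mul_right _ hi
    _ ≤ ∑ m ∈ range (n + 1), m * ℓ' m :=
        Finset.single_le_sum (f := fun m => m * ℓ' m) (fun _ _ => Nat.zero_le _)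
          (Finset.mem_range.2 (show i < n + 1 by omega))
    _ = n := hc

lemma rev_shift_sum {M : Type*} [AddCommMonoid M] (n : ℕ) (ℓ' : ℕ → ℕ)
    (F : ℕ → ℕ → M) (h0 : F 0 (ℓ' 0) = 0) :
    ∑ m ∈ range (n + 1), F m (ℓ' m) = ∑ i : Fin n, F (i.1 + 1) (ℓ' (i.1 + 1)) := by
  rw [Finset.sum_range_succ', h0, add_zero, Finset.sum_range fun j => F (j + 1) (ℓ' (j + 1))]

lemma bellB_eq (n k : ℕ) :
    BellB n k (fun i => 1 / ((i : ℚ) + 1))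
      = (n.factorial : ℚ) / (k.factorial : ℚ) * coeff n (fS ^ k) := by
  rw [coeff_trunc, coeff_PQ_pow]
  rw [show (∑ ℓ ∈ (piAntidiag (range (n + 1)) k).filter
        (fun ℓ => ∑ m ∈ range (n + 1), m * ℓ m = n),
      ((Nat.multinomial (range (n + 1)) ℓ : ℚ)) * ∏ m ∈ range (n + 1), aQ m ^ ℓ m)
      = ∑ ℓ ∈ ((piAntidiag (range (n + 1)) k).filter
        (fun ℓ => ∑ m ∈ range (n + 1), m * ℓ m = n)).filter (fun ℓ => ℓ 0 = 0),
      ((Nat.multinomial (range (n + 1)) ℓ : ℚ)) * ∏ m ∈ range (n + 1), aQ m ^ ℓ m by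
    refine (Finset.sum_filter_of_ne ?_).symm
    intro ℓ _ hne
    by_contra h00
    apply hne
    have : ∏ m ∈ range (n + 1), aQ m ^ ℓ m = 0 := by
      apply Finset.prod_eq_zero (Finset.mem_range.2 (by omega : (0:ℕ) < n + 1))
      have ha0 : aQ 0 = 0 := by simp [aQ]
      rw [ha0, zero_pow h00]
    rw [this, mul_zero]]
  rw [BellB, Finset.mul_sum]
  apply Finset.sum_nbij' (Phi n) (Psi n)
  · intro ℓ hℓ
    simp only [Finset.mem_filter, Finset.mem_univ, true_and] at hℓ
    obtain ⟨hn, hk⟩ := hℓ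
    simp only [Finset.mem_filter, mem_piAntidiag]
    refine ⟨⟨⟨?_, ?_⟩, ?_⟩, ?_⟩
    · rw [shift_sum n ℓ (fun _ v => v) rfl]; exact hk
    · intro m hm
      rw [Finset.mem_range]
      by_contra hmn
      apply hm
      have hx : ¬(1 ≤ m ∧ m ≤ n) := by omega
      simp [Phi, hx]
    · rw [shift_sum n ℓ (fun m v => m * v) rfl]; exact hn
    · simp [Phi]
  · intro ℓ' hℓ'
    simp only [Finset.mem_filter, mem_piAntidiag] at hℓ'
    obtain ⟨⟨⟨hsum, hsupp⟩, hwt⟩, h0⟩ := hℓ'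
    have hb : ∀ i : Fin n, (Psi n ℓ' i : ℕ) = ℓ' (i.1 + 1) := by
      intro i
      have := bound_of_sum n ℓ' hwt (i := i.1 + 1) (by omega) (by omega)
      simp [Psi, Nat.min_eq_left this]
    simp only [Finset.mem_filter, Finset.mem_univ, true_and]
    constructor
    · rw [show (∑ i : Fin n, (i.1 + 1) * (Psi n ℓ' i : ℕ))
          = ∑ i : Fin n, (i.1 + 1) * ℓ' (i.1 + 1) by
        exact Finset.sum_congr rfl fun i _ => by rw [hb]]
      rw [← rev_shift_sum n ℓ' (fun m v => m * v) (by simp)]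
      exact hwt
    · rw [show (∑ i : Fin n, (Psi n ℓ' i : ℕ)) = ∑ i : Fin n, ℓ' (i.1 + 1) by
        exact Finset.sum_congr rfl fun i _ => by rw [hb]]
      rw [← rev_shift_sum n ℓ' (fun _ v => v) (by simp [h0])]
      exact hsum
  · intro ℓ hℓ
    funext i
    apply Fin.ext
    have h2 : Phi n ℓ (i.1 + 1) = (ℓ i : ℕ) := by
      rw [Phi, dif_pos ⟨by omega, by omega⟩]
      congr
    simp only [Psi, h2]
    exact Nat.min_eq_left (by omega)
  · intro ℓ' hℓ'
    simp only [Finset.mem_filter, mem_piAntidiag] at hℓ'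
    obtain ⟨⟨⟨hsum, hsupp⟩, hwt⟩, h0⟩ := hℓ'
    funext m
    rw [Phi]
    by_cases h : 1 ≤ m ∧ m ≤ n
    · rw [dif_pos h]
      have hb := bound_of_sum n ℓ' hwt (i := m) h.1 h.2
      have : m - 1 + 1 = m := by omega
      simp [Psi, this, Nat.min_eq_left hb]
    · rw [dif_neg h]
      rcases Nat.eq_zero_or_pos m with hm | hm
      · rw [hm, h0]
      · by_contra hne
        have := hsupp m (fun hh => hne hh.symm)
        rw [Finset.mem_range] at this
        omega
  · intro ℓ hℓ
    simp only [Finset.mem_filter, Finset.mem_univ, true_and] at hℓ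
    obtain ⟨hn, hk⟩ := hℓ
    have hsum : ∑ m ∈ range (n + 1), Phi n ℓ m = k := by
      rw [shift_sum n ℓ (fun _ v => v) rfl]; exact hk
    have hprodfact : (∏ m ∈ range (n + 1), (Phi n ℓ m).factorial)
        = ∏ i : Fin n, ((ℓ i : ℕ)).factorial := by
      exact shift_prod n ℓ (fun _ v => v.factorial) rfl
    have hproda : (∏ m ∈ range (n + 1), aQ m ^ Phi n ℓ m)
        = ∏ i : Fin n, aQ (i.1 + 1) ^ (ℓ i : ℕ) := by
      exact shift_prod n ℓ (fun m v => aQ m ^ v) rfl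
    have hmult : ((∏ m ∈ range (n + 1), (Phi n ℓ m).factorial) : ℚ)
        * (Nat.multinomial (range (n + 1)) (Phi n ℓ) : ℚ) = (k.factorial : ℚ) := by
      have := Nat.multinomial_spec (range (n + 1)) (Phi n ℓ)
      rw [hsum] at this
      exact_mod_cast congrArg (Nat.cast : ℕ → ℚ) this
    have hxa : ∀ i : Fin n, ((1 : ℚ) / ((i.1 + 1 : ℕ) + 1 : ℚ)) / ((i.1 + 1).factorial : ℚ)
        = aQ (i.1 + 1) := by
      intro i
      rw [aQ, if_neg (Nat.succ_ne_zero _)]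
      rw [Nat.factorial_succ (i.1 + 1)]
      push_cast
      have h1 : ((i.1 + 1).factorial : ℚ) ≠ 0 := Nat.cast_ne_zero.2 (Nat.factorial_ne_zero _)
      field_simp
    have hfne : (((∏ i : Fin n, ((ℓ i : ℕ)).factorial : ℕ)) : ℚ) ≠ 0 := by
      rw [Nat.cast_ne_zero]
      exact Finset.prod_ne_zero_iff.2 fun i _ => Nat.factorial_ne_zero _
    have hkne : (k.factorial : ℚ) ≠ 0 := Nat.cast_ne_zero.2 (Nat.factorial_ne_zero _)
    rw [hproda]
    simp only [hxa]
    have hm' : (Nat.multinomial (range (n + 1)) (Phi n ℓ) : ℚ)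
        = (k.factorial : ℚ) / ((∏ i : Fin n, ((ℓ i : ℕ)).factorial : ℕ) : ℚ) := by
      rw [← hprodfact]
      push_cast
      push_cast at hmult
      field_simp
      linarith [hmult]
    rw [hm']
    push_cast
    field_simp

end Aux

theorem bellB_half_third (n k : ℕ) (hk : 1 ≤ k) (hkn : k ≤ n) :
    BellB n k (fun i => 1 / ((i : ℚ) + 1)) =
      (n.factorial : ℚ) / ((n + k).factorial : ℚ) *
        ∑ i ∈ Finset.range (k + 1),
          (-1 : ℚ) ^ (k - i) * ((n + k).choose (k - i) : ℚ) * (S (n + i) i : ℚ) := by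
  rw [bellB_eq, coeff_fS_pow, Finset.mul_sum, Finset.mul_sum]
  apply Finset.sum_congr rfl
  intro i hi
  rw [Finset.mem_range] at hi
  have hik : i ≤ k := by omega
  have c1 : ((k.choose i : ℕ) : ℚ) = (k.factorial : ℚ) / ((i.factorial : ℚ) * ((k - i).factorial : ℚ)) := by
    rw [Nat.cast_choose ℚ hik]
  have c2 : (((n + k).choose (k - i) : ℕ) : ℚ)
      = ((n + k).factorial : ℚ) / (((k - i).factorial : ℚ) * ((n + i).factorial : ℚ)) := by
    rw [Nat.cast_choose ℚ (by omega : k - i ≤ n + k), show n + k - (k - i) = n + i by omega]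
  rw [c1, c2]
  have h1 : (k.factorial : ℚ) ≠ 0 := Nat.cast_ne_zero.2 (Nat.factorial_ne_zero _)
  have h2 : (i.factorial : ℚ) ≠ 0 := Nat.cast_ne_zero.2 (Nat.factorial_ne_zero _)
  have h3 : ((k - i).factorial : ℚ) ≠ 0 := Nat.cast_ne_zero.2 (Nat.factorial_ne_zero _)
  have h4 : ((n + i).factorial : ℚ) ≠ 0 := Nat.cast_ne_zero.2 (Nat.factorial_ne_zero _)
  have h5 : ((n + k).factorial : ℚ) ≠ 0 := Nat.cast_ne_zero.2 (Nat.factorial_ne_zero _)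
  field_simp
end
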